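/- Let G = (V, E) be a finite simple graph, a ∈ V with nonempty neighborhood N(a), and b₀ ∈ N(a). Let E₀ = {e ∈ E : a ∉ e}, E′ = {e ∈ E₀ : b₀ ∉ e}, and N₀(b₀) = {c ∈ V∖{a} : {c, b₀} ∈ E₀}. Then there exist nonzero complex scalars c₊, c₋ such that the post-measurement states of a Pauli-X measurement of qubit a on the graph state |G⟩ satisfy, as states of the qubits V∖{a}: H_{b₀} (⟨+|_a ⊗ I)|G⟩ = c₊ · ∏_{e∈E′} C_e · ∏_{c∈N₀(b₀)} ∏_{i∈N(a)∖{b₀}} C_{{c}∪{i}} · ∏_{i∈N(a)∖{b₀}} C_{{i,b₀}} |+⟩^{⊗(|V|−1)} and H_{b₀} (⟨−|_a ⊗ I)|G⟩ = c₋ · Z_{b₀} ∏_{c∈N₀(b₀)} Z_c · ∏_{e∈E′} C_e · ∏_{c∈N₀(b₀)} ∏_{i∈N(a)∖{b₀}} C_{{c}∪{i}} · ∏_{i∈N(a)∖{b₀}} C_{{i,b₀}} |+⟩^{⊗(|V|−1)}. In particular, for both outcomes the post-measurement state is a graph state up to the Hadamard on b₀ and Pauli-Z corrections, recovering the known graph-state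 Pauli-X measurement rule from the hypergraph-state rule. -/

import Mathlib

noncomputable section

/-- The state space of qubits labeled by `ι`: a vector is the family of its
amplitudes in the computational basis `{|x⟩ : x : ι → Bool}`. -/
abbrev QState (ι : Type) := (ι → Bool) → ℂ

/-- The sign `(−1)^{∏_{i∈e} x_i}` of the generalized controlled-Z gate `C_e`
on the basis vector `|x⟩`. -/
def csign {ι : Type} (e : Finset ι) (x : ι → Bool) : ℂ :=
  if ∀ i ∈ e, x i = true then -1 else 1

/-- The generalized controlled-Z gate `C_e`, the diagonal unitary with
`C_e |x⟩ = (−1)^{∏_{i∈e} x_i} |x⟩`. -/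
def Cgate {ι : Type} (e : Finset ι) (ψ : QState ι) : QState ι :=
  fun x => csign e x * ψ x

/-- The Hadamard gate `H_i` on qubit `i`, acting as the identity on all other
qubits. -/
def Hgate {ι : Type} [DecidableEq ι] (i : ι) (ψ : QState ι) : QState ι :=
  fun x => (((Real.sqrt 2)⁻¹ : ℝ) : ℂ) *
    (ψ (Function.update x i false) +
      (if x i = true then -1 else 1) * ψ (Function.update x i true))

/-- The Pauli-X (bit flip) gate `X_i` on qubit `i`. -/
def Xgate {ι : Type} [DecidableEq ι] (i : ι) (ψ : QState ι) : QState ι :=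
  fun x => ψ (Function.update x i (!(x i)))

/-- The generalized CNOT gate with control set `f` and target `t ∉ f`:
it flips bit `t` of `x` exactly when `∏_{j∈f} x_j = 1`. -/
def CNOTgate {ι : Type} [DecidableEq ι] (f : Finset ι) (t : ι) (ψ : QState ι) : QState ι :=
  fun x => ψ (if ∀ j ∈ f, x j = true then Function.update x t (!(x t)) else x)

/-- `|+⟩^{⊗n}`, the uniform superposition `2^{−n/2} ∑_x |x⟩`. -/
def plusAll (ι : Type) [Fintype ι] : QState ι :=
  fun _ => (((Real.sqrt 2)⁻¹ : ℝ) : ℂ) ^ (Fintype.card ι)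

/-- The computational-basis ket `|s⟩`. -/
def zketS {ι : Type} [Fintype ι] [DecidableEq ι] (s : ι → Bool) : QState ι :=
  fun x => if x = s then 1 else 0

/-- The Pauli-X-basis product ket: qubit `i` is `|+⟩` if `s i = false` and
`|−⟩` if `s i = true`, where `|±⟩ = (|0⟩ ± |1⟩)/√2`. -/
def xketS {ι : Type} [Fintype ι] (s : ι → Bool) : QState ι :=
  fun x => ∏ i, ((((Real.sqrt 2)⁻¹ : ℝ) : ℂ) * (if s i && x i then -1 else 1))

/-- Tensor product of a state of the qubits `κ` with a state of the qubits `ι`. -/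
def tensP {κ ι : Type} (φ : QState κ) (u : QState ι) : QState (κ ⊕ ι) :=
  fun x => φ (fun i => x (Sum.inl i)) * u (fun j => x (Sum.inr j))

/-- The partial inner product `(⟨φ|_κ ⊗ I)`, sending a state of the qubits
`κ ⊕ ι` to a state of the remaining qubits `ι`. -/
def pinner {κ ι : Type} [Fintype κ] [DecidableEq κ] (φ : QState κ) (w : QState (κ ⊕ ι)) :
    QState ι :=
  fun y => ∑ b : κ → Bool, (starRingEnd ℂ) (φ b) * w (Sum.elim b y)

/-- Tensor product of a single-qubit state on qubit `i` with a state of the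
remaining qubits. -/
def tensQ {ι : Type} [DecidableEq ι] (i : ι) (φ : Bool → ℂ) (ψ : QState {j : ι // j ≠ i}) :
    QState ι :=
  fun x => φ (x i) * ψ (fun j => x j.1)

/-- The partial inner product over the single qubit `i`. -/
def pinner1 {ι : Type} [DecidableEq ι] (i : ι) (φ : Bool → ℂ) (w : QState ι) :
    QState {j : ι // j ≠ i} :=
  fun y => ∑ b : Bool, (starRingEnd ℂ) (φ b) * w (fun j => if h : j = i then b else y ⟨j, h⟩)

/-- The hypergraph state `∏_{e∈E} C_e |+⟩^{⊗|V|}` of the hypergraph `(V, E)`. -/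
def hgState {ι : Type} [Fintype ι] (E : Finset (Finset ι)) : QState ι :=
  fun x => (∏ e ∈ E, csign e x) * plusAll ι x

/-- Sequential composition (operator product) of a list of operators. -/
def seqComp {α : Type} (fs : List (α → α)) : α → α := fs.foldr (· ∘ ·) id
section GSXaux

variable {ι : Type} [DecidableEq ι]

theorem GSX_csign_congr (e : Finset ι) {x x' : ι → Bool} (h : ∀ i ∈ e, x i = x' i) :
    csign e x = csign e x' := by
  unfold csign
  exact if_congr ⟨fun H i hi => (h i hi).symm.trans (H i hi), fun H i hi => (h i hi).trans (H i hi)⟩ rfl rfl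

theorem GSX_csign_pair (u v : ι) (x : ι → Bool) :
    csign ({u, v} : Finset ι) x = if x u && x v then -1 else 1 := by
  unfold csign
  refine if_congr ?_ rfl rfl
  simp [Bool.and_eq_true]

theorem GSX_csign_single (u : ι) (x : ι → Bool) :
    csign ({u} : Finset ι) x = if x u then -1 else 1 := by
  unfold csign
  refine if_congr ?_ rfl rfl
  simp

theorem GSX_csign_subtype {a : ι} (e : Finset ι) (hae : a ∉ e) (z : {j : ι // j ≠ a} → Bool)
    (x : ι → Bool) (hx : ∀ (j : ι) (h : j ≠ a), x j = z ⟨j, h⟩) :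
    csign e x = csign (e.subtype (· ≠ a)) z := by
  unfold csign
  refine if_congr ?_ rfl rfl
  constructor
  · rintro H ⟨j, hj⟩ hj'
    rw [Finset.mem_subtype] at hj'
    rw [← hx j hj]; exact H j hj'
  · intro H j hj
    have hja : j ≠ a := fun h => hae (h ▸ hj)
    rw [hx j hja]
    exact H ⟨j, hja⟩ (Finset.mem_subtype.mpr hj)

theorem GSX_prod_sign {α : Type} (s : Finset α) (f : α → Bool) :
    (∏ i ∈ s, (if f i then (-1 : ℂ) else 1)) = 1 ∨
      (∏ i ∈ s, (if f i then (-1 : ℂ) else 1)) = -1 := by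
  refine Finset.prod_induction _ (fun z => z = 1 ∨ z = -1) ?_ (Or.inl rfl) ?_
  · rintro x y (hx | hx) (hy | hy) <;> subst hx <;> subst hy <;> simp
  · intro i _
    by_cases h : f i <;> simp [h]

theorem GSX_card (a : ι) [Fintype ι] :
    Fintype.card ι = Fintype.card {j : ι // j ≠ a} + 1 := by
  have h1 : Fintype.card {j : ι // ¬ j = a} = Fintype.card ι - Fintype.card {j : ι // j = a} :=
    Fintype.card_subtype_compl _
  have h2 : Fintype.card {j : ι // j = a} = 1 := Fintype.card_subtype_eq a
  have h3 : 1 ≤ Fintype.card ι := Fintype.card_pos_iff.mpr ⟨a⟩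
  have : Fintype.card {j : ι // j ≠ a} = Fintype.card {j : ι // ¬ j = a} := rfl
  omega

end GSXaux
section GSXaux2
set_option linter.unusedSectionVars false

variable {ι : Type} [Fintype ι] [DecidableEq ι]

theorem GSX_edge_form {E : Finset (Finset ι)} (hE : ∀ e ∈ E, e.card = 2) {a : ι} {e : Finset ι}
    (he : e ∈ E) (hae : a ∈ e) : ∃ u : ι, u ≠ a ∧ e = {a, u} := by
  obtain ⟨u, v, huv, rfl⟩ := Finset.card_eq_two.mp (hE e he)
  rcases Finset.mem_insert.mp hae with h | h
  · exact ⟨v, fun hv => huv (h ▸ hv ▸ rfl), by rw [h]⟩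
  · rw [Finset.mem_singleton] at h
    exact ⟨u, fun hu => huv (hu ▸ h ▸ rfl), by rw [h, Finset.pair_comm]⟩

theorem GSX_prod_E1 (E : Finset (Finset ι)) (hE : ∀ e ∈ E, e.card = 2) (a : ι)
    (f : Finset ι → ℂ) :
    ∏ e ∈ E.filter (fun e => ¬ a ∉ e), f e
      = ∏ i ∈ Finset.univ.filter (fun i : {j : ι // j ≠ a} => ({a, i.1} : Finset ι) ∈ E),
          f {a, i.1} := by
  refine (Finset.prod_bij (fun i _ => ({a, i.1} : Finset ι)) ?_ ?_ ?_ ?_).symm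
  · intro i hi
    rw [Finset.mem_filter] at hi ⊢
    exact ⟨hi.2, by simp⟩
  · intro i hi j hj hij
    have hij' : ({a, i.1} : Finset ι) = {a, j.1} := hij
    have : i.1 ∈ ({a, j.1} : Finset ι) := hij' ▸ (by simp : i.1 ∈ ({a, i.1} : Finset ι))
    rcases Finset.mem_insert.mp this with h | h
    · exact absurd h i.2
    · exact Subtype.ext (Finset.mem_singleton.mp h)
  · intro e he
    rw [Finset.mem_filter, not_not] at he
    obtain ⟨u, hua, rfl⟩ := GSX_edge_form hE he.1 he.2
    exact ⟨⟨u, hua⟩, Finset.mem_filter.mpr ⟨Finset.mem_univ _, he.1⟩, rfl⟩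
  · intro i _; rfl

theorem GSX_pair_ne {E : Finset (Finset ι)} (hE : ∀ e ∈ E, e.card = 2) {u v : ι}
    (h : ({u, v} : Finset ι) ∈ E) : u ≠ v := by
  intro huv
  have := hE _ h
  rw [huv, Finset.insert_eq_self.mpr (Finset.mem_singleton_self v)] at this
  simp at this

theorem GSX_prod_E2 (E : Finset (Finset ι)) (hE : ∀ e ∈ E, e.card = 2) (a b₀ : ι)
    (hb₀a : b₀ ≠ a) (f : Finset ι → ℂ) :
    ∏ e ∈ (E.filter fun e => a ∉ e).filter (fun e => ¬ b₀ ∉ e), f e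
      = ∏ c ∈ Finset.univ.filter (fun c : {j : ι // j ≠ a} =>
            ({c.1, b₀} : Finset ι) ∈ E.filter fun e => a ∉ e),
          f {c.1, b₀} := by
  refine (Finset.prod_bij (fun c _ => ({c.1, b₀} : Finset ι)) ?_ ?_ ?_ ?_).symm
  · intro c hc
    rw [Finset.mem_filter] at hc ⊢
    exact ⟨hc.2, by simp⟩
  · intro c hc d hd hcd
    rw [Finset.mem_filter] at hc hd
    have hcb : c.1 ≠ b₀ := GSX_pair_ne hE (Finset.mem_filter.mp hc.2).1
    have hcd' : ({c.1, b₀} : Finset ι) = {d.1, b₀} := hcd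
    have : c.1 ∈ ({d.1, b₀} : Finset ι) := hcd' ▸ (by simp : c.1 ∈ ({c.1, b₀} : Finset ι))
    rcases Finset.mem_insert.mp this with h | h
    · exact Subtype.ext h
    · exact absurd (Finset.mem_singleton.mp h) hcb
  · intro e he
    rw [Finset.mem_filter, not_not] at he
    have he0 := Finset.mem_filter.mp he.1
    obtain ⟨u, hub, rfl⟩ := GSX_edge_form hE he0.1 he.2
    have hua : u ≠ a := fun h => he0.2 (h ▸ (by simp : u ∈ ({b₀, u} : Finset ι)))
    refine ⟨⟨u, hua⟩, Finset.mem_filter.mpr ⟨Finset.mem_univ _, ?_⟩, ?_⟩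
    · rw [Finset.pair_comm]; exact he.1
    · show ({u, b₀} : Finset ι) = {b₀, u}
      rw [Finset.pair_comm]
  · intro c _; rfl

theorem GSX_prod_image_subtype (E' : Finset (Finset ι)) (a : ι) (hE' : ∀ e ∈ E', a ∉ e)
    (y : {j : ι // j ≠ a} → Bool) :
    ∏ e ∈ E'.image (Finset.subtype fun j => j ≠ a), csign e y
      = ∏ e ∈ E', csign (e.subtype fun j => j ≠ a) y := by
  refine Finset.prod_image ?_
  intro e₁ h₁ e₂ h₂ h
  ext j
  by_cases hja : j = a
  · subst hja
    exact iff_of_false (hE' e₁ h₁) (hE' e₂ h₂)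
  · constructor
    · intro hj
      have : (⟨j, hja⟩ : {j : ι // j ≠ a}) ∈ e₁.subtype (· ≠ a) := Finset.mem_subtype.mpr hj
      rw [h] at this
      exact Finset.mem_subtype.mp this
    · intro hj
      have : (⟨j, hja⟩ : {j : ι // j ≠ a}) ∈ e₂.subtype (· ≠ a) := Finset.mem_subtype.mpr hj
      rw [← h] at this
      exact Finset.mem_subtype.mp this

theorem GSX_pair_subtype (a b₀ : ι) (hb₀a : b₀ ≠ a) (c : {j : ι // j ≠ a}) :
    (({c.1, b₀} : Finset ι).subtype fun j => j ≠ a) = ({c, ⟨b₀, hb₀a⟩} : Finset {j : ι // j ≠ a}) := by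
  ext ⟨j, hj⟩
  simp [Finset.mem_subtype, Subtype.ext_iff]

end GSXaux2
section GSXaux3
set_option linter.unusedSectionVars false

variable {ι : Type} [Fintype ι] [DecidableEq ι]

theorem GSX_psi (E : Finset (Finset ι)) (hE : ∀ e ∈ E, e.card = 2) (a : ι) (ε : Bool)
    (z : {j : ι // j ≠ a} → Bool) :
    pinner1 a (fun b => (((Real.sqrt 2)⁻¹ : ℝ) : ℂ) * (if ε && b then -1 else 1)) (hgState E) z
      = (((Real.sqrt 2)⁻¹ : ℝ) : ℂ) ^ (Fintype.card ι + 1) *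
        ((∏ e ∈ E.filter (fun e => a ∉ e), csign (e.subtype fun j => j ≠ a) z) *
         (1 + (if ε then (-1 : ℂ) else 1) *
            ∏ i ∈ Finset.univ.filter (fun i : {j : ι // j ≠ a} => ({a, i.1} : Finset ι) ∈ E),
              (if z i then (-1 : ℂ) else 1))) := by
  have h0 : ∀ b : Bool,
      ∏ e ∈ E.filter (fun e => a ∉ e), csign e (fun j => if h : j = a then b else z ⟨j, h⟩)
        = ∏ e ∈ E.filter (fun e => a ∉ e), csign (e.subtype fun j => j ≠ a) z := by
    intro b
    refine Finset.prod_congr rfl fun e he => ?_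
    exact GSX_csign_subtype e (Finset.mem_filter.mp he).2 z _ (fun j h => by simp [h])
  have h1f : ∏ e ∈ E.filter (fun e => ¬ a ∉ e),
      csign e (fun j => if h : j = a then false else z ⟨j, h⟩) = 1 := by
    refine Finset.prod_eq_one fun e he => ?_
    rw [Finset.mem_filter, not_not] at he
    unfold csign
    rw [if_neg]
    intro H
    simpa using H a he.2
  have h1t : ∏ e ∈ E.filter (fun e => ¬ a ∉ e),
      csign e (fun j => if h : j = a then true else z ⟨j, h⟩)
        = ∏ i ∈ Finset.univ.filter (fun i : {j : ι // j ≠ a} => ({a, i.1} : Finset ι) ∈ E),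
            (if z i then (-1 : ℂ) else 1) := by
    rw [GSX_prod_E1 E hE a]
    refine Finset.prod_congr rfl fun i hi => ?_
    rw [GSX_csign_pair]
    simp [i.2]
  simp only [pinner1, hgState, plusAll]
  rw [Fintype.sum_bool]
  rw [← Finset.prod_filter_mul_prod_filter_not E (fun e => a ∉ e)
        (fun e => csign e (fun j => if h : j = a then true else z ⟨j, h⟩)),
      ← Finset.prod_filter_mul_prod_filter_not E (fun e => a ∉ e)
        (fun e => csign e (fun j => if h : j = a then false else z ⟨j, h⟩))]
  rw [h0 true, h0 false, h1f, h1t]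
  simp only [Bool.and_true, Bool.and_false, map_mul, Complex.conj_ofReal,
    apply_ite (starRingEnd ℂ), map_neg, map_one, Bool.false_eq_true, if_false]
  ring

end GSXaux3
section GSXaux4
set_option linter.unusedSectionVars false

variable {ι : Type} [Fintype ι] [DecidableEq ι]

theorem GSX_D (E : Finset (Finset ι)) (hE : ∀ e ∈ E, e.card = 2) (a b₀ : ι) (hb₀a : b₀ ≠ a)
    (y : {j : ι // j ≠ a} → Bool) (b : Bool) :
    ∏ e ∈ E.filter (fun e => a ∉ e),
        csign (e.subtype fun j => j ≠ a) (Function.update y ⟨b₀, hb₀a⟩ b)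
      = (∏ e ∈ (E.filter fun e => a ∉ e).filter (fun e => b₀ ∉ e),
            csign (e.subtype fun j => j ≠ a) y)
        * (if b then
            ∏ c ∈ Finset.univ.filter (fun c : {j : ι // j ≠ a} =>
                ({c.1, b₀} : Finset ι) ∈ E.filter fun e => a ∉ e),
              (if y c then (-1 : ℂ) else 1)
          else 1) := by
  rw [← Finset.prod_filter_mul_prod_filter_not (E.filter fun e => a ∉ e) (fun e => b₀ ∉ e)]
  congr 1
  · refine Finset.prod_congr rfl fun e he => ?_
    refine GSX_csign_congr _ fun i hi => ?_
    rw [Finset.mem_subtype] at hi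
    have : i ≠ ⟨b₀, hb₀a⟩ := by
      intro h
      rw [h] at hi
      exact (Finset.mem_filter.mp he).2 hi
    rw [Function.update_of_ne this]
  · rw [GSX_prod_E2 E hE a b₀ hb₀a
      (fun e => csign (e.subtype fun j => j ≠ a) (Function.update y ⟨b₀, hb₀a⟩ b))]
    have : ∀ c ∈ Finset.univ.filter (fun c : {j : ι // j ≠ a} =>
        ({c.1, b₀} : Finset ι) ∈ E.filter fun e => a ∉ e),
        csign ((({c.1, b₀} : Finset ι)).subtype fun j => j ≠ a) (Function.update y ⟨b₀, hb₀a⟩ b)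
          = (if y c && b then (-1 : ℂ) else 1) := by
      intro c hc
      have hcb : c.1 ≠ b₀ := GSX_pair_ne hE (Finset.mem_filter.mp (Finset.mem_filter.mp hc).2).1
      have hcb' : c ≠ (⟨b₀, hb₀a⟩ : {j : ι // j ≠ a}) := fun h => hcb (congrArg Subtype.val h)
      rw [GSX_pair_subtype a b₀ hb₀a c, GSX_csign_pair]
      rw [Function.update_of_ne hcb', Function.update_self]
    rw [Finset.prod_congr rfl this]
    cases b <;> simp

theorem GSX_S (E : Finset (Finset ι)) (a b₀ : ι) (hb₀a : b₀ ≠ a)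
    (hb₀ : ({a, b₀} : Finset ι) ∈ E) (y : {j : ι // j ≠ a} → Bool) (b : Bool) :
    ∏ i ∈ Finset.univ.filter (fun i : {j : ι // j ≠ a} => ({a, i.1} : Finset ι) ∈ E),
        (if (Function.update y ⟨b₀, hb₀a⟩ b) i then (-1 : ℂ) else 1)
      = (if b then (-1 : ℂ) else 1) *
        ∏ i ∈ Finset.univ.filter (fun i : {j : ι // j ≠ a} =>
            ({a, i.1} : Finset ι) ∈ E ∧ i.1 ≠ b₀),
          (if y i then (-1 : ℂ) else 1) := by
  have hsplit : Finset.univ.filter (fun i : {j : ι // j ≠ a} => ({a, i.1} : Finset ι) ∈ E)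
      = insert ⟨b₀, hb₀a⟩ (Finset.univ.filter (fun i : {j : ι // j ≠ a} =>
          ({a, i.1} : Finset ι) ∈ E ∧ i.1 ≠ b₀)) := by
    ext i
    simp only [Finset.mem_filter, Finset.mem_univ, true_and, Finset.mem_insert]
    constructor
    · intro h
      by_cases hib : i.1 = b₀
      · exact Or.inl (Subtype.ext hib)
      · exact Or.inr ⟨h, hib⟩
    · rintro (rfl | ⟨h, _⟩)
      · exact hb₀
      · exact h
  have hnm : (⟨b₀, hb₀a⟩ : {j : ι // j ≠ a}) ∉ Finset.univ.filter
      (fun i : {j : ι // j ≠ a} => ({a, i.1} : Finset ι) ∈ E ∧ i.1 ≠ b₀) := by simp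
  rw [hsplit, Finset.prod_insert hnm, Function.update_self]
  congr 1
  refine Finset.prod_congr rfl fun i hi => ?_
  have : i ≠ (⟨b₀, hb₀a⟩ : {j : ι // j ≠ a}) :=
    fun h => (Finset.mem_filter.mp hi).2.2 (congrArg Subtype.val h)
  rw [Function.update_of_ne this]

end GSXaux4
section GSXaux5
set_option linter.unusedSectionVars false

variable {ι : Type} [Fintype ι] [DecidableEq ι]

theorem GSX_A (E : Finset (Finset ι)) (a b₀ : ι) (hb₀a : b₀ ≠ a) (y : {j : ι // j ≠ a} → Bool) :
    ∏ c ∈ Finset.univ.filter (fun c : {j : ι // j ≠ a} =>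
        ({c.1, b₀} : Finset ι) ∈ E.filter fun e => a ∉ e),
      ∏ i ∈ Finset.univ.filter (fun i : {j : ι // j ≠ a} =>
          ({a, i.1} : Finset ι) ∈ E ∧ i.1 ≠ b₀),
        csign ({c, i} : Finset {j : ι // j ≠ a}) y
    = ∏ c ∈ Finset.univ.filter (fun c : {j : ι // j ≠ a} =>
        ({c.1, b₀} : Finset ι) ∈ E.filter fun e => a ∉ e),
        (if y c then
            (∏ i ∈ Finset.univ.filter (fun i : {j : ι // j ≠ a} =>
                ({a, i.1} : Finset ι) ∈ E ∧ i.1 ≠ b₀), (if y i then (-1 : ℂ) else 1))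
          else 1) := by
  refine Finset.prod_congr rfl fun c _ => ?_
  by_cases hc : y c = true
  · rw [if_pos hc]
    refine Finset.prod_congr rfl fun i _ => ?_
    rw [GSX_csign_pair]
    simp [hc]
  · rw [if_neg hc]
    refine Finset.prod_eq_one fun i _ => ?_
    rw [GSX_csign_pair]
    simp [hc]

theorem GSX_B (E : Finset (Finset ι)) (a b₀ : ι) (hb₀a : b₀ ≠ a) (y : {j : ι // j ≠ a} → Bool) :
    ∏ i ∈ Finset.univ.filter (fun i : {j : ι // j ≠ a} =>
        ({a, i.1} : Finset ι) ∈ E ∧ i.1 ≠ b₀),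
      csign ({i, ⟨b₀, hb₀a⟩} : Finset {j : ι // j ≠ a}) y
    = if y ⟨b₀, hb₀a⟩ then
        (∏ i ∈ Finset.univ.filter (fun i : {j : ι // j ≠ a} =>
            ({a, i.1} : Finset ι) ∈ E ∧ i.1 ≠ b₀), (if y i then (-1 : ℂ) else 1))
      else 1 := by
  by_cases hb : y ⟨b₀, hb₀a⟩ = true
  · rw [if_pos hb]
    refine Finset.prod_congr rfl fun i _ => ?_
    rw [GSX_csign_pair]
    simp [hb]
  · rw [if_neg hb]
    refine Finset.prod_eq_one fun i _ => ?_
    rw [GSX_csign_pair]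
    simp [hb]

theorem GSX_Zprod (E : Finset (Finset ι)) (a b₀ : ι) (y : {j : ι // j ≠ a} → Bool) :
    ∏ c ∈ Finset.univ.filter (fun c : {j : ι // j ≠ a} =>
        ({c.1, b₀} : Finset ι) ∈ E.filter fun e => a ∉ e),
      csign ({c} : Finset {j : ι // j ≠ a}) y
    = ∏ c ∈ Finset.univ.filter (fun c : {j : ι // j ≠ a} =>
        ({c.1, b₀} : Finset ι) ∈ E.filter fun e => a ∉ e),
        (if y c then (-1 : ℂ) else 1) :=
  Finset.prod_congr rfl fun c _ => GSX_csign_single c y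

end GSXaux5
/-- The Pauli-X measurement rule for graph states, recovered
from the hypergraph-state rule.  `G = (V,E)` is a finite simple graph (edges
are 2-element subsets), `a` a vertex, `b₀ ∈ N(a)` (so `{a,b₀} ∈ E` and
`b₀ ≠ a`).  With `E₀ = {e ∈ E : a ∉ e}`, `E′ = {e ∈ E₀ : b₀ ∉ e}` and
`N₀(b₀) = {c ∈ V∖{a} : {c,b₀} ∈ E₀}`, there are nonzero scalars `c₊, c₋` with
`H_{b₀} (⟨+|_a ⊗ I)|G⟩ = c₊ · ∏_{e∈E′} C_e · ∏_{c∈N₀(b₀)} ∏_{i∈N(a)∖{b₀}} C_{{c}∪{i}}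
  · ∏_{i∈N(a)∖{b₀}} C_{{i,b₀}} |+⟩^{⊗(|V|−1)}` and
`H_{b₀} (⟨−|_a ⊗ I)|G⟩ = c₋ · Z_{b₀} ∏_{c∈N₀(b₀)} Z_c · (same products) |+⟩^{⊗(|V|−1)}`. -/
theorem graph_state_X_measurement_rule {ι : Type} [Fintype ι] [DecidableEq ι]
    (E : Finset (Finset ι)) (hE : ∀ e ∈ E, e.card = 2) (a b₀ : ι)
    (hb₀a : b₀ ≠ a) (hb₀ : ({a, b₀} : Finset ι) ∈ E) :
    ∃ cp cm : ℂ, cp ≠ 0 ∧ cm ≠ 0 ∧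
      Hgate (⟨b₀, hb₀a⟩ : {j : ι // j ≠ a})
          (pinner1 a (fun _ => (((Real.sqrt 2)⁻¹ : ℝ) : ℂ)) (hgState E))
        = cp • (fun y : {j : ι // j ≠ a} → Bool =>
            (∏ e ∈ ((E.filter fun e => a ∉ e).filter fun e => b₀ ∉ e).image
                (Finset.subtype fun j => j ≠ a), csign e y) *
            ((∏ c ∈ Finset.univ.filter (fun c : {j : ι // j ≠ a} =>
                  ({c.1, b₀} : Finset ι) ∈ E.filter fun e => a ∉ e),
                ∏ i ∈ Finset.univ.filter (fun i : {j : ι // j ≠ a} =>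
                    ({a, i.1} : Finset ι) ∈ E ∧ i.1 ≠ b₀),
                  csign ({c, i} : Finset {j : ι // j ≠ a}) y) *
            ((∏ i ∈ Finset.univ.filter (fun i : {j : ι // j ≠ a} =>
                  ({a, i.1} : Finset ι) ∈ E ∧ i.1 ≠ b₀),
                csign ({i, ⟨b₀, hb₀a⟩} : Finset {j : ι // j ≠ a}) y) *
              plusAll {j : ι // j ≠ a} y))) ∧
      Hgate (⟨b₀, hb₀a⟩ : {j : ι // j ≠ a})
          (pinner1 a (fun b => (((Real.sqrt 2)⁻¹ : ℝ) : ℂ) * (if b then -1 else 1))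
            (hgState E))
        = cm • (fun y : {j : ι // j ≠ a} → Bool =>
            csign ({(⟨b₀, hb₀a⟩ : {j : ι // j ≠ a})} : Finset {j : ι // j ≠ a}) y *
            ((∏ c ∈ Finset.univ.filter (fun c : {j : ι // j ≠ a} =>
                  ({c.1, b₀} : Finset ι) ∈ E.filter fun e => a ∉ e),
                csign ({c} : Finset {j : ι // j ≠ a}) y) *
            ((∏ e ∈ ((E.filter fun e => a ∉ e).filter fun e => b₀ ∉ e).image
                (Finset.subtype fun j => j ≠ a), csign e y) *
            ((∏ c ∈ Finset.univ.filter (fun c : {j : ι // j ≠ a} =>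
                  ({c.1, b₀} : Finset ι) ∈ E.filter fun e => a ∉ e),
                ∏ i ∈ Finset.univ.filter (fun i : {j : ι // j ≠ a} =>
                    ({a, i.1} : Finset ι) ∈ E ∧ i.1 ≠ b₀),
                  csign ({c, i} : Finset {j : ι // j ≠ a}) y) *
            ((∏ i ∈ Finset.univ.filter (fun i : {j : ι // j ≠ a} =>
                  ({a, i.1} : Finset ι) ∈ E ∧ i.1 ≠ b₀),
                csign ({i, ⟨b₀, hb₀a⟩} : Finset {j : ι // j ≠ a}) y) *
              plusAll {j : ι // j ≠ a} y))))) := by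
  classical
  set rc : ℂ := (((Real.sqrt 2)⁻¹ : ℝ) : ℂ) with hrc
  have hrcne : rc ≠ 0 := by
    rw [hrc]
    exact_mod_cast Complex.ofReal_ne_zero.mpr
      (inv_ne_zero (ne_of_gt (Real.sqrt_pos.mpr (by norm_num))))
  refine ⟨2 * rc ^ 3, 2 * rc ^ 3, mul_ne_zero two_ne_zero (pow_ne_zero _ hrcne),
    mul_ne_zero two_ne_zero (pow_ne_zero _ hrcne), ?_, ?_⟩
  · funext y
    have hφ : (fun _ : Bool => rc) = (fun b : Bool => rc * (if false && b then -1 else 1)) := by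
      funext b; simp
    simp only [Hgate, Pi.smul_apply, smul_eq_mul, hφ]
    rw [GSX_psi E hE a false, GSX_psi E hE a false]
    simp only [GSX_D E hE a b₀ hb₀a y, GSX_S E a b₀ hb₀a hb₀ y]
    rw [GSX_prod_image_subtype _ a (fun e he => (Finset.mem_filter.mp (Finset.mem_filter.mp he).1).2) y,
      GSX_A E a b₀ hb₀a y, GSX_B E a b₀ hb₀a y]
    simp only [plusAll, GSX_card a, if_true, if_false, Bool.false_eq_true, mul_one, one_mul]
    rw [hrc]
    rcases GSX_prod_sign (Finset.univ.filter (fun i : {j : ι // j ≠ a} =>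
        ({a, i.1} : Finset ι) ∈ E ∧ i.1 ≠ b₀)) y with hT | hT <;> rw [hT]
    · simp only [ite_self, Finset.prod_const_one]
      ring
    · ring
  · funext y
    have hφ : (fun b : Bool => rc * (if b then -1 else 1))
        = (fun b : Bool => rc * (if true && b then -1 else 1)) := by
      funext b; simp
    simp only [Hgate, Pi.smul_apply, smul_eq_mul, hφ]
    rw [GSX_psi E hE a true, GSX_psi E hE a true]
    simp only [GSX_D E hE a b₀ hb₀a y, GSX_S E a b₀ hb₀a hb₀ y]
    rw [GSX_prod_image_subtype _ a (fun e he => (Finset.mem_filter.mp (Finset.mem_filter.mp he).1).2) y,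
      GSX_A E a b₀ hb₀a y, GSX_B E a b₀ hb₀a y, GSX_csign_single, GSX_Zprod E a b₀ y]
    simp only [plusAll, GSX_card a, if_true, if_false, Bool.false_eq_true, mul_one, one_mul]
    rw [hrc]
    rcases GSX_prod_sign (Finset.univ.filter (fun i : {j : ι // j ≠ a} =>
        ({a, i.1} : Finset ι) ∈ E ∧ i.1 ≠ b₀)) y with hT | hT <;> rw [hT]
    · simp only [ite_self, Finset.prod_const_one]
      ring
    · rcases GSX_prod_sign (Finset.univ.filter (fun c : {j : ι // j ≠ a} =>
          ({c.1, b₀} : Finset ι) ∈ E.filter fun e => a ∉ e)) y with hR | hR <;> rw [hR] <;>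
        by_cases h : y ⟨b₀, hb₀a⟩ = true
      · rw [if_pos h]; ring
      · rw [if_neg h]; ring
      · rw [if_pos h]; ring
      · rw [if_neg h]; ring
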